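/- arXiv:2303.13231 — 3 statements merged into one kernel-verified Lean document; each statement's English description precedes it below -/
import Mathlib

section
/- Let Ω be a probability space with probability measure μ, and let X, Y, Z be random variables on Ω taking values in finite (measurable, discrete) types. If the conditional Shannon entropy of X given the pair (Z, Y) is zero, i.e. H[X | ⟨Z, Y⟩; μ] = 0, and X is independent of Y under μ, then the conditional entropy of Z given Y is at least the entropy of X: H[Z | Y; μ] ≥ H[X; μ]. -/
open MeasureTheory ProbabilityTheory

/-- Shannon entropy (in nats) of a random variable `X` taking values in a finite type,
under the measure `μ`: `H[X; μ] = ∑ x, -p(x) log p(x)`. -/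
noncomputable def shannonEntropy {Ω S : Type*} [MeasurableSpace Ω] [Fintype S]
    (X : Ω → S) (μ : Measure Ω) : ℝ :=
  ∑ x : S, Real.negMulLog (μ (X ⁻¹' {x})).toReal

/-- Conditional Shannon entropy `H[X | Y; μ] = H[⟨X, Y⟩; μ] - H[Y; μ]` of finite-valued
random variables. -/
noncomputable def condShannonEntropy {Ω S T : Type*} [MeasurableSpace Ω] [Fintype S]
    [Fintype T] (X : Ω → S) (Y : Ω → T) (μ : Measure Ω) : ℝ :=
  shannonEntropy (fun ω => (X ω, Y ω)) μ - shannonEntropy Y μ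

lemma negMulLog_sum_le {ι : Type*} (s : Finset ι) (p : ι → ℝ) (hp : ∀ i ∈ s, 0 ≤ p i) :
    Real.negMulLog (∑ i ∈ s, p i) ≤ ∑ i ∈ s, Real.negMulLog (p i) := by
  have hs : 0 ≤ ∑ i ∈ s, p i := Finset.sum_nonneg hp
  rw [Real.negMulLog, neg_mul, Finset.sum_mul, ← Finset.sum_neg_distrib]
  apply Finset.sum_le_sum
  intro i hi
  rcases eq_or_lt_of_le (hp i hi) with h | h
  · simp [← h]
  · rw [Real.negMulLog, neg_mul, neg_le_neg_iff]
    exact mul_le_mul_of_nonneg_left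
      (Real.log_le_log h (Finset.single_le_sum hp hi)) (hp i hi)

/-- sum of point masses is 1 -/
lemma sum_preimage_eq_one {Ω S : Type*} [MeasurableSpace Ω] [Fintype S]
    [MeasurableSpace S] [MeasurableSingletonClass S]
    (μ : Measure Ω) [IsProbabilityMeasure μ] (X : Ω → S) (hX : Measurable X) :
    ∑ x : S, (μ (X ⁻¹' {x})).toReal = 1 := by
  have h : ∑ x : S, μ (X ⁻¹' {x}) = μ Set.univ := by
    rw [← measure_biUnion_finset _ (fun x _ => hX (measurableSet_singleton x))]
    · congr 1
      ext ω; simp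
    · intro a _ b _ hab
      apply Set.disjoint_left.2
      rintro ω h1 h2
      exact hab (by simpa using h1.symm.trans (h2 : X ω = b))
  have : ∑ x : S, (μ (X ⁻¹' {x})).toReal = (∑ x : S, μ (X ⁻¹' {x})).toReal := by
    rw [ENNReal.toReal_sum]
    intro a _; exact measure_ne_top μ _
  rw [this, h]
  simp

/-- Entropy decreases under deterministic maps. -/
lemma shannonEntropy_comp_le {Ω A B : Type*} [MeasurableSpace Ω] [Fintype A] [Fintype B]
    [MeasurableSpace A] [MeasurableSingletonClass A]
    (μ : Measure Ω) [IsFiniteMeasure μ] (W : Ω → A) (hW : Measurable W) (φ : A → B) :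
    shannonEntropy (fun ω => φ (W ω)) μ ≤ shannonEntropy W μ := by
  classical
  unfold shannonEntropy
  have key : ∀ b : B, (μ ((fun ω => φ (W ω)) ⁻¹' {b})).toReal
      = ∑ a ∈ Finset.univ.filter (fun a => φ a = b), (μ (W ⁻¹' {a})).toReal := by
    intro b
    have hpre : ((fun ω => φ (W ω)) ⁻¹' {b}) =
        ⋃ a ∈ Finset.univ.filter (fun a => φ a = b), W ⁻¹' {a} := by
      ext ω
      simp only [Set.mem_preimage, Set.mem_singleton_iff, Set.mem_iUnion,
        Finset.mem_filter, Finset.mem_univ, true_and]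
      constructor
      · intro h; exact ⟨W ω, h, rfl⟩
      · rintro ⟨a, h1, h2⟩
        rw [h2, h1]
    rw [hpre, measure_biUnion_finset ?_ (fun a _ => hW (measurableSet_singleton a)),
      ENNReal.toReal_sum (fun a _ => measure_ne_top μ _)]
    intro a _ c _ hac
    apply Set.disjoint_left.2
    rintro ω h1 h2
    simp only [Set.mem_preimage, Set.mem_singleton_iff] at h1 h2
    exact hac (h1.symm.trans h2)
  calc ∑ b : B, Real.negMulLog (μ ((fun ω => φ (W ω)) ⁻¹' {b})).toReal
      ≤ ∑ b : B, ∑ a ∈ Finset.univ.filter (fun a => φ a = b),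
          Real.negMulLog (μ (W ⁻¹' {a})).toReal := by
        apply Finset.sum_le_sum
        intro b _
        rw [key b]
        exact negMulLog_sum_le _ _ (fun a _ => ENNReal.toReal_nonneg)
    _ = ∑ a : A, Real.negMulLog (μ (W ⁻¹' {a})).toReal :=
        Finset.sum_fiberwise _ _ _

/-- Entropy of independent pair is the sum. -/
lemma shannonEntropy_pair_of_indep {Ω S T : Type*} [MeasurableSpace Ω]
    [Fintype S] [MeasurableSpace S] [MeasurableSingletonClass S]
    [Fintype T] [MeasurableSpace T] [MeasurableSingletonClass T]
    (μ : Measure Ω) [IsProbabilityMeasure μ]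
    (X : Ω → S) (Y : Ω → T) (hX : Measurable X) (hY : Measurable Y)
    (hindep : IndepFun X Y μ) :
    shannonEntropy (fun ω => (X ω, Y ω)) μ = shannonEntropy X μ + shannonEntropy Y μ := by
  unfold shannonEntropy
  rw [Fintype.sum_prod_type]
  have : ∀ x : S, ∀ y : T,
      (μ ((fun ω => (X ω, Y ω)) ⁻¹' {(x, y)})).toReal
      = (μ (X ⁻¹' {x})).toReal * (μ (Y ⁻¹' {y})).toReal := by
    intro x y
    have hpre : (fun ω => (X ω, Y ω)) ⁻¹' {(x, y)} = X ⁻¹' {x} ∩ Y ⁻¹' {y} := by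
      ext ω; simp [Prod.ext_iff]
    rw [hpre, hindep.measure_inter_preimage_eq_mul _ _ (measurableSet_singleton x)
      (measurableSet_singleton y), ENNReal.toReal_mul]
  calc ∑ x : S, ∑ y : T, Real.negMulLog (μ ((fun ω => (X ω, Y ω)) ⁻¹' {(x, y)})).toReal
      = ∑ x : S, ∑ y : T, ((μ (Y ⁻¹' {y})).toReal * Real.negMulLog (μ (X ⁻¹' {x})).toReal
          + (μ (X ⁻¹' {x})).toReal * Real.negMulLog (μ (Y ⁻¹' {y})).toReal) := by
        apply Finset.sum_congr rfl; intro x _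
        apply Finset.sum_congr rfl; intro y _
        rw [this x y, Real.negMulLog_mul]
    _ = shannonEntropy X μ + shannonEntropy Y μ := by
        simp only [Finset.sum_add_distrib, ← Finset.sum_mul, ← Finset.mul_sum]
        rw [sum_preimage_eq_one μ X hX, sum_preimage_eq_one μ Y hY]
        unfold shannonEntropy
        ring

/-- If `X` is determined by `(Z, Y)` (i.e. `H[X | ⟨Z, Y⟩; μ] = 0`) and `X` is independent
of `Y`, then `H[Z | Y; μ] ≥ H[X; μ]`. -/
theorem condEntropy_ge_entropy_of_determined_of_indep
    {Ω S T U : Type*} [MeasurableSpace Ω]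
    [Fintype S] [MeasurableSpace S] [MeasurableSingletonClass S]
    [Fintype T] [MeasurableSpace T] [MeasurableSingletonClass T]
    [Fintype U] [MeasurableSpace U] [MeasurableSingletonClass U]
    (μ : Measure Ω) [IsProbabilityMeasure μ]
    (X : Ω → S) (Y : Ω → T) (Z : Ω → U)
    (hX : Measurable X) (hY : Measurable Y) (hZ : Measurable Z)
    (h0 : condShannonEntropy X (fun ω => (Z ω, Y ω)) μ = 0)
    (hindep : IndepFun X Y μ) :
    shannonEntropy X μ ≤ condShannonEntropy Z Y μ := by
  have h1 : shannonEntropy (fun ω => (X ω, (Z ω, Y ω))) μ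
      = shannonEntropy (fun ω => (Z ω, Y ω)) μ := by
    have := h0
    unfold condShannonEntropy at this
    linarith
  have h2 : shannonEntropy (fun ω => (X ω, Y ω)) μ
      ≤ shannonEntropy (fun ω => (X ω, (Z ω, Y ω))) μ :=
    shannonEntropy_comp_le μ (fun ω => (X ω, (Z ω, Y ω)))
      (hX.prodMk (hZ.prodMk hY)) (fun p => (p.1, p.2.2))
  have h3 := shannonEntropy_pair_of_indep μ X Y hX hY hindep
  unfold condShannonEntropy
  linarith
end

section
/- Let M be an additive commutative monoid, let k ≥ 1 be a natural number, and let a, b : ℕ → M satisfy ∑_{i ∈ Finset.Ico 0 k} a i ≠ ∑_{i ∈ Finset.Ico 0 k} b i. Then there exist T ≤ Nat.clog 2 k and sequences lo, hi : ℕ → ℕ such that: lo 0 = 0 and hi 0 = k; hi T = lo T + 1; for every t < T, setting mid_t = lo t + (hi t - lo t + 1) / 2 (natural-number division, i.e. the midpoint with upper half rounded), either (lo (t+1), hi (t+1)) = (lo t, mid_t) or (lo (t+1), hi (t+1)) = (mid_t, hi t); and for every t ≤ T, ∑_{i ∈ Finset.Ico (lo t) (hi t)} a i ≠ ∑_{i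 ∈ Finset.Ico (lo t) (hi t)} b i. In particular, a (lo T) ≠ b (lo T). -/
private theorem match_aux {M : Type*} [AddCommMonoid M] (a b : ℕ → M) :
    ∀ n : ℕ, 1 ≤ n → ∀ l : ℕ,
    (∑ i ∈ Finset.Ico l (l + n), a i ≠ ∑ i ∈ Finset.Ico l (l + n), b i) →
    ∃ T ≤ Nat.clog 2 n, ∃ lo hi : ℕ → ℕ,
      lo 0 = l ∧ hi 0 = l + n ∧ hi T = lo T + 1 ∧
      (∀ t < T,
        (lo (t + 1) = lo t ∧ hi (t + 1) = lo t + (hi t - lo t + 1) / 2) ∨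
        (lo (t + 1) = lo t + (hi t - lo t + 1) / 2 ∧ hi (t + 1) = hi t)) ∧
      (∀ t ≤ T,
        ∑ i ∈ Finset.Ico (lo t) (hi t), a i ≠ ∑ i ∈ Finset.Ico (lo t) (hi t), b i) ∧
      a (lo T) ≠ b (lo T) := by
  intro n
  induction n using Nat.strong_induction_on with
  | _ n ih =>
    intro hn l hne
    rcases eq_or_lt_of_le hn with h1 | h2
    · -- n = 1
      subst h1
      refine ⟨0, by simp, fun _ => l, fun _ => l + 1, rfl, rfl, rfl, by omega, ?_, ?_⟩
      · intro t ht
        simpa using hne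
      · simpa using hne
    · -- 2 ≤ n
      set m := (n + 1) / 2 with hm
      have hm1 : 1 ≤ m := by omega
      have hm2 : m < n := by omega
      have hsplit : ∀ f : ℕ → M,
          ∑ i ∈ Finset.Ico l (l + n), f i =
            ∑ i ∈ Finset.Ico l (l + m), f i + ∑ i ∈ Finset.Ico (l + m) (l + n), f i := by
        intro f
        exact (Finset.sum_Ico_consecutive f (by omega) (by omega)).symm
      have hclog : Nat.clog 2 n = Nat.clog 2 m + 1 := by
        rw [Nat.clog_of_two_le (by norm_num) (by omega)]
        congr 2
        try omega
      have hkey : (∑ i ∈ Finset.Ico l (l + m), a i ≠ ∑ i ∈ Finset.Ico l (l + m), b i) ∨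
          (∑ i ∈ Finset.Ico (l + m) (l + n), a i ≠ ∑ i ∈ Finset.Ico (l + m) (l + n), b i) := by
        by_contra hc
        push_neg at hc
        exact hne (by rw [hsplit a, hsplit b, hc.1, hc.2])
      rcases hkey with hL | hR
      · obtain ⟨T, hT, lo, hi, hlo0, hhi0, hend, hstep, hdis, hab⟩ := ih m hm2 hm1 l hL
        refine ⟨T + 1, by omega,
          (fun t => if t = 0 then l else lo (t - 1)),
          (fun t => if t = 0 then l + n else hi (t - 1)), rfl, rfl, by simpa using hend,
          ?_, ?_, by simpa using hab⟩
        · intro t ht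
          cases t with
          | zero => left; simp [hlo0, hhi0]; try omega
          | succ s =>
            have := hstep s (by omega)
            simpa using this
        · intro t ht
          cases t with
          | zero => simpa using hne
          | succ s =>
            have := hdis s (by omega)
            simpa using this
      · have hrewr : l + n = (l + m) + (n - m) := by omega
        rw [hrewr] at hR
        obtain ⟨T, hT, lo, hi, hlo0, hhi0, hend, hstep, hdis, hab⟩ :=
          ih (n - m) (by omega) (by omega) (l + m) hR
        have hT' : T + 1 ≤ Nat.clog 2 n := by
          have := Nat.clog_mono_right 2 (show n - m ≤ m by omega)
          omega
        refine ⟨T + 1, hT',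
          (fun t => if t = 0 then l else lo (t - 1)),
          (fun t => if t = 0 then l + n else hi (t - 1)), rfl, rfl,
          by simp [hend], ?_, ?_, by simpa using hab⟩
        · intro t ht
          cases t with
          | zero => right; simp [hlo0, hhi0]; try omega
          | succ s =>
            have := hstep s (by omega)
            simpa using this
        · intro t ht
          cases t with
          | zero => simpa using hne
          | succ s =>
            have := hdis s (by omega)
            simpa using this

/-- Correctness and round complexity of a match between two workers: starting from two
disagreeing sums of `k` partial gradients, a binary descent of length `T ≤ ⌈log₂ k⌉`
through nested halved intervals, maintaining disagreement on every interval sum,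
terminates at a single index on which the two workers' claimed values differ. -/
theorem match_descent {M : Type*} [AddCommMonoid M] (k : ℕ) (hk : 1 ≤ k) (a b : ℕ → M)
    (h : ∑ i ∈ Finset.Ico 0 k, a i ≠ ∑ i ∈ Finset.Ico 0 k, b i) :
    ∃ T ≤ Nat.clog 2 k, ∃ lo hi : ℕ → ℕ,
      lo 0 = 0 ∧ hi 0 = k ∧ hi T = lo T + 1 ∧
      (∀ t < T,
        (lo (t + 1) = lo t ∧ hi (t + 1) = lo t + (hi t - lo t + 1) / 2) ∨
        (lo (t + 1) = lo t + (hi t - lo t + 1) / 2 ∧ hi (t + 1) = hi t)) ∧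
      (∀ t ≤ T,
        ∑ i ∈ Finset.Ico (lo t) (hi t), a i ≠ ∑ i ∈ Finset.Ico (lo t) (hi t), b i) ∧
      a (lo T) ≠ b (lo T) := by
  have h' : ∑ i ∈ Finset.Ico 0 (0 + k), a i ≠ ∑ i ∈ Finset.Ico 0 (0 + k), b i := by
    simpa using h
  simpa using match_aux a b k hk 0 h'
end

section
/- Let s, u, q be natural numbers with 1 ≤ u ≤ s and q ≥ 2, and let c = s / u (natural-number division, i.e. c = ⌊s/u⌋, so c ≥ 1). Then the sequence n ↦ ((s + 1 − u) · (2 · ⌈Real.logb 2 n⌉ + (s + 3u) / (2 · Real.logb 2 q))) / Real.logb q (Nat.choose n c) tends to 2 · Real.logb 2 q · (s + 1 − u) / c as n → ∞ (along the atTop filter on ℕ). -/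
open Filter Real

private lemma logN_atTop : Tendsto (fun n : ℕ => Real.log n) atTop atTop :=
  Real.tendsto_log_atTop.comp tendsto_natCast_atTop_atTop

private lemma const_div_logN (a : ℝ) :
    Tendsto (fun n : ℕ => a / Real.log n) atTop (nhds 0) :=
  tendsto_const_nhds.div_atTop logN_atTop

private lemma ceil_logb_div_log :
    Tendsto (fun n : ℕ => (⌈Real.logb 2 n⌉ : ℝ) / Real.log n) atTop
      (nhds (1 / Real.log 2)) := by
  have h2 : Real.log 2 ≠ 0 := by
    exact ne_of_gt (Real.log_pos one_lt_two)
  have herr : Tendsto (fun n : ℕ =>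
      ((⌈Real.logb 2 n⌉ : ℝ) - Real.logb 2 n) / Real.log n) atTop (nhds 0) := by
    apply squeeze_zero' (g := fun n : ℕ => 1 / Real.log n)
    · filter_upwards [logN_atTop.eventually_gt_atTop 0] with n hn
      exact div_nonneg (by linarith [Int.le_ceil (Real.logb 2 n)]) hn.le
    · filter_upwards [logN_atTop.eventually_gt_atTop 0] with n hn
      have h1 := Int.ceil_lt_add_one (Real.logb 2 n)
      gcongr
      linarith
    · exact const_div_logN 1
  have hmain : Tendsto (fun n : ℕ =>
      Real.logb 2 n / Real.log n +
      ((⌈Real.logb 2 n⌉ : ℝ) - Real.logb 2 n) / Real.log n) atTop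
      (nhds (1 / Real.log 2)) := by
    have h1 : Tendsto (fun n : ℕ => Real.logb 2 n / Real.log n) atTop
        (nhds (1 / Real.log 2)) := by
      apply Tendsto.congr' ?_ tendsto_const_nhds
      filter_upwards [logN_atTop.eventually_gt_atTop 0] with n hn
      rw [Real.logb]
      field_simp
    simpa using h1.add herr
  apply hmain.congr
  intro n
  field_simp
  ring

private lemma log_choose_div_log (c : ℕ) (hc : 1 ≤ c) :
    Tendsto (fun n : ℕ => Real.log (Nat.choose n c) / Real.log n) atTop
      (nhds c) := by
  have hlow : Tendsto (fun n : ℕ =>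
      (c : ℝ) - ((c : ℝ) * Real.log 2 + Real.log (Nat.factorial c)) / Real.log n)
      atTop (nhds c) := by
    simpa using (tendsto_const_nhds (x := (c : ℝ))).sub
      (const_div_logN ((c : ℝ) * Real.log 2 + Real.log (Nat.factorial c)))
  apply tendsto_of_tendsto_of_tendsto_of_le_of_le' hlow tendsto_const_nhds
  · -- lower bound eventually
    filter_upwards [eventually_ge_atTop (2 * c + 2)] with n hn
    have hn2 : (2 : ℝ) ≤ (n : ℝ) := by
      have : 2 ≤ n := le_trans (by omega) hn
      exact_mod_cast this
    have hlogn : 0 < Real.log n := Real.log_pos (by linarith)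
    -- key : (n/2)^c ≤ c! * choose n c
    have hcast : ((n + 1 - c : ℕ) : ℝ) = (n : ℝ) + 1 - c := by
      have : c ≤ n + 1 := by omega
      push_cast [Nat.cast_sub this]
      ring
    have hkey : ((n : ℝ) / 2) ^ c ≤ (Nat.factorial c : ℝ) * Nat.choose n c := by
      have h1 : (n + 1 - c) ^ c ≤ Nat.factorial c * Nat.choose n c := by
        rw [← Nat.descFactorial_eq_factorial_mul_choose]
        exact Nat.pow_sub_le_descFactorial n c
      have h1' : (((n + 1 - c : ℕ)) ^ c : ℝ) ≤ (Nat.factorial c : ℝ) * Nat.choose n c := by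
        exact_mod_cast h1
      refine le_trans ?_ h1'
      push_cast [hcast]
      apply pow_le_pow_left₀ (by positivity)
      have : (c : ℝ) ≤ n / 2 + 1 := by
        have : (c : ℝ) * 2 ≤ n := by exact_mod_cast (by omega : c * 2 ≤ n)
        linarith
      linarith
    have hpos : (0 : ℝ) < ((n : ℝ) / 2) ^ c := by positivity
    have hlog : (c : ℝ) * (Real.log n - Real.log 2) ≤
        Real.log (Nat.factorial c) + Real.log (Nat.choose n c) := by
      have := Real.log_le_log hpos hkey
      rw [Real.log_pow, Real.log_div (by linarith) (by norm_num)] at this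
      rw [← Real.log_mul (by positivity) ?hne]
      · exact this
      case hne =>
        have : 0 < Nat.choose n c := Nat.choose_pos (by omega)
        positivity
    have heq : (c : ℝ) - ((c : ℝ) * Real.log 2 + Real.log (Nat.factorial c)) / Real.log n
        = ((c : ℝ) * Real.log n - ((c : ℝ) * Real.log 2 + Real.log (Nat.factorial c))) / Real.log n := by
      field_simp
    rw [heq, div_le_div_iff_of_pos_right hlogn]
    linarith
  · -- upper bound eventually
    filter_upwards [eventually_ge_atTop (2 * c + 2)] with n hn
    have hn2 : (2 : ℝ) ≤ (n : ℝ) := by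
      have : 2 ≤ n := by omega
      exact_mod_cast this
    have hlogn : 0 < Real.log n := Real.log_pos (by linarith)
    rw [div_le_iff₀ hlogn]
    have hch : 0 < Nat.choose n c := Nat.choose_pos (by omega)
    have h1 : (Nat.choose n c : ℝ) ≤ (n : ℝ) ^ c := by
      exact_mod_cast Nat.choose_le_pow n c
    have h2 : Real.log (Nat.choose n c) ≤ Real.log ((n : ℝ) ^ c) :=
      Real.log_le_log (by exact_mod_cast hch) h1
    rw [Real.log_pow] at h2
    linarith

/-- Asymptotic ratio of the achievable communication overhead of the proposed `s`-BGC
scheme to the converse bound: with `c = ⌊s/u⌋`,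
`(s+1-u)(2⌈log₂ n⌉ + (s+3u)/(2 log₂ q)) / log_q C(n, c) → 2 log₂(q) (s+1-u)/c`. -/
theorem comm_overhead_ratio_tendsto (s u q : ℕ) (hu1 : 1 ≤ u) (hus : u ≤ s) (hq : 2 ≤ q)
    (c : ℕ) (hc : c = s / u) :
    Tendsto (fun n : ℕ =>
        (((s : ℝ) + 1 - u) * (2 * (⌈Real.logb 2 n⌉ : ℝ) +
          ((s : ℝ) + 3 * u) / (2 * Real.logb 2 q))) /
        Real.logb q (Nat.choose n c)) atTop
      (nhds (2 * Real.logb 2 q * ((s : ℝ) + 1 - u) / c)) := by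
  have hc1 : 1 ≤ c := by
    subst hc
    exact (Nat.one_le_div_iff (by omega)).mpr hus
  set A : ℝ := (s : ℝ) + 1 - u with hA
  set K : ℝ := ((s : ℝ) + 3 * u) / (2 * Real.logb 2 q) with hK
  have hlog2 : (0 : ℝ) < Real.log 2 := Real.log_pos one_lt_two
  have hnum : Tendsto (fun n : ℕ =>
      A * Real.log q * (2 * ((⌈Real.logb 2 n⌉ : ℝ) / Real.log n) + K / Real.log n))
      atTop (nhds (A * Real.log q * (2 * (1 / Real.log 2) + 0))) :=
    tendsto_const_nhds.mul ((ceil_logb_div_log.const_mul 2).add (const_div_logN K))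
  have hG : Tendsto (fun n : ℕ =>
      (A * Real.log q * (2 * ((⌈Real.logb 2 n⌉ : ℝ) / Real.log n) + K / Real.log n)) /
      (Real.log (Nat.choose n c) / Real.log n)) atTop
      (nhds ((A * Real.log q * (2 * (1 / Real.log 2) + 0)) / c)) := by
    apply hnum.div (log_choose_div_log c hc1)
    exact Nat.cast_ne_zero.mpr (by omega)
  have hval : (A * Real.log q * (2 * (1 / Real.log 2) + 0)) / c
      = 2 * Real.logb 2 q * A / c := by
    rw [Real.logb]
    field_simp
    ring
  rw [← hval]
  apply hG.congr'
  filter_upwards [eventually_ge_atTop 2] with n hn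
  have hn2 : (2 : ℝ) ≤ (n : ℝ) := by exact_mod_cast hn
  have hLn : (0 : ℝ) < Real.log n := Real.log_pos (by linarith)
  simp only [Real.logb]
  rw [div_div_eq_mul_div, div_div_eq_mul_div]
  congr 1
  field_simp
end
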